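/- Let f ∈ k[x_0,...,x_r] be a homogeneous polynomial with nonvanishing Hessian, and let Z(f) denote the closure of the image of the polar map φ_f, with homogeneous coordinate ring k[f_0,...,f_r]. Then dim Z(f) + 1 equals the rank ρ(f) of the Hessian matrix of f computed over the rational function field k(x_0,...,x_r). -/

import Mathlib

section

open MvPolynomial

variable {k : Type*} [Field k] {n : ℕ}

/-- Any polynomial of total degree at most `N` lies in the span of the monomials with all
exponents at most `N`. -/
theorem mem_span_box (N : ℕ) (p : MvPolynomial (Fin n) k) (hp : p.totalDegree ≤ N) :
    p ∈ Submodule.span k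
      ((fun b : Fin n → Fin (N + 1) =>
        (monomial (Finsupp.equivFunOnFinite.symm fun i => (b i : ℕ)) (1:k) :
          MvPolynomial (Fin n) k)) '' Set.univ) := by
  classical
  rw [← support_sum_monomial_coeff p]
  refine Submodule.sum_mem _ fun m hm => ?_
  have hmle : ∀ i, m i ≤ N := by
    intro i
    refine le_trans ?_ (le_trans (le_totalDegree hm) hp)
    by_cases h : i ∈ m.support
    · exact Finset.single_le_sum (f := fun i => m i) (fun _ _ => Nat.zero_le _) h
    · simp [Finsupp.notMem_support_iff.mp h]
  have : (monomial m (coeff m p) : MvPolynomial (Fin n) k)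
      = (coeff m p) • monomial m (1:k) := by simp [smul_monomial]
  rw [this]
  refine Submodule.smul_mem _ _ (Submodule.subset_span ?_)
  refine ⟨fun i => ⟨m i, Nat.lt_succ_of_le (hmle i)⟩, Set.mem_univ _, ?_⟩
  congr 1
  ext i
  simp

/-- Any `n+1` elements of a polynomial ring in `n` variables are algebraically dependent. -/
theorem not_algIndep_succ (T : Fin (n + 1) → MvPolynomial (Fin n) k) :
    ¬ AlgebraicIndependent k T := by
  classical
  intro hT
  have hinj : Function.Injective (aeval T : MvPolynomial (Fin (n+1)) k →ₐ[k] _) :=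
    algebraicIndependent_iff_injective_aeval.mp hT
  set d : ℕ := (Finset.univ.sup fun i => (T i).totalDegree) + 1 with hd
  have hdT : ∀ i, (T i).totalDegree ≤ d :=
    fun i => le_trans (Finset.le_sup (f := fun i => (T i).totalDegree) (Finset.mem_univ i))
      (Nat.le_succ _)
  set M : ℕ := (d * (n+1) + 1) ^ n with hM
  set D : ℕ := (n+1) * M with hD
  set α : (Fin (n+1) → Fin (M + 1)) → (Fin (n+1) →₀ ℕ) :=
    fun a => Finsupp.equivFunOnFinite.symm (fun i => (a i : ℕ)) with hα
  have hαinj : Function.Injective α := by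
    intro a b hab
    funext i
    have := congrArg (fun (f : Fin (n+1) →₀ ℕ) => f i) hab
    exact Fin.val_injective (by simpa [hα] using this)
  have hli : LinearIndependent k fun a : Fin (n+1) → Fin (M+1) =>
      (aeval T (monomial (α a) (1:k)) : MvPolynomial (Fin n) k) := by
    have h1 : LinearIndependent k fun a : Fin (n+1) → Fin (M+1) =>
        (monomial (α a) (1:k) : MvPolynomial (Fin (n+1)) k) := by
      have h0 := (basisMonomials (Fin (n+1)) k).linearIndependent.comp α hαinj
      have he : ((basisMonomials (Fin (n+1)) k) ∘ α)
          = fun a => (monomial (α a) (1:k) : MvPolynomial (Fin (n+1)) k) := by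
        funext a; simp [coe_basisMonomials]
      rwa [he] at h0
    exact h1.map' (aeval T).toLinearMap (LinearMap.ker_eq_bot.mpr (fun x y h => hinj h))
  set B : Set (MvPolynomial (Fin n) k) :=
    ((fun b : Fin n → Fin (d * D + 1) =>
      (monomial (Finsupp.equivFunOnFinite.symm fun i => (b i : ℕ)) (1:k) :
        MvPolynomial (Fin n) k)) '' Set.univ) with hB
  have hBfin : B.Finite := Set.Finite.image _ Set.finite_univ
  have hmem : ∀ a : Fin (n+1) → Fin (M+1),
      (aeval T (monomial (α a) (1:k)) : MvPolynomial (Fin n) k) ∈ Submodule.span k B := by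
    intro a
    refine mem_span_box (d * D) _ ?_
    rw [aeval_monomial, map_one, one_mul]
    have hprod : (α a).prod (fun i e => T i ^ e) = ∏ i : Fin (n+1), T i ^ (a i : ℕ) := by
      rw [Finsupp.prod_fintype]
      · simp [hα]
      · intro i; exact pow_zero _
    rw [hprod]
    refine le_trans (totalDegree_finset_prod _ _) ?_
    calc (∑ i : Fin (n+1), (T i ^ (a i : ℕ)).totalDegree)
        ≤ ∑ _i : Fin (n+1), M * d := by
          refine Finset.sum_le_sum fun i _ => ?_
          refine le_trans (totalDegree_pow _ _) ?_
          exact Nat.mul_le_mul (Nat.lt_succ_iff.mp (a i).isLt) (hdT i)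
      _ = (n+1) * (M * d) := by simp [Finset.sum_const, mul_comm]
      _ = d * D := by rw [hD]; ring
  -- linear independence in the span
  letI : Fintype B := hBfin.fintype
  have hWfin : Module.Finite k (Submodule.span k B) :=
    Module.Finite.span_of_finite k hBfin
  have hcard : Fintype.card (Fin (n+1) → Fin (M+1)) ≤ Module.finrank k (Submodule.span k B) := by
    have hli' : LinearIndependent k fun a : Fin (n+1) → Fin (M+1) =>
        (⟨aeval T (monomial (α a) (1:k)), hmem a⟩ : Submodule.span k B) := by
      refine LinearIndependent.of_comp (Submodule.span k B).subtype ?_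
      exact hli
    exact hli'.fintype_card_le_finrank
  have hrank : Module.finrank k (Submodule.span k B) ≤ Fintype.card (Fin n → Fin (d * D + 1)) := by
    refine le_trans (finrank_span_le_card B) ?_
    rw [Set.toFinset_image]
    refine le_trans (Finset.card_image_le) ?_
    simp
  have hfinal : (M+1)^(n+1) ≤ (d * D + 1)^n := by
    have := le_trans hcard hrank
    simpa [Fintype.card_fun] using this
  -- numeric contradiction
  have hnum : (d * D + 1)^n < (M+1)^(n+1) := by
    have h1 : d * D + 1 ≤ (d * (n+1) + 1) * (M + 1) := by
      have : d * D = d * (n+1) * M := by rw [hD]; ring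
      rw [this]
      nlinarith
    calc (d * D + 1)^n ≤ ((d * (n+1) + 1) * (M + 1))^n := Nat.pow_le_pow_left h1 n
      _ = M * (M+1)^n := by rw [mul_pow, hM]
      _ < (M+1) * (M+1)^n := by
          have : (0:ℕ) < (M+1)^n := Nat.pow_pos (Nat.succ_pos _)
          exact Nat.mul_lt_mul_of_lt_of_le (Nat.lt_succ_self _) le_rfl this
      _ = (M+1)^(n+1) := by rw [pow_succ, mul_comm]
  exact absurd hfinal (Nat.not_le.mpr hnum)

end

section

open MvPolynomial Polynomial

variable {k : Type*} [Field k] {n : ℕ}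

/-- If `p < q` are primes and we have `m` algebraically independent elements mod `q`,
then there are `m+1` algebraically independent elements mod `p`. -/
theorem exists_algIndep_succ_of_lt {R : Type*} [CommRing R] [Algebra k R]
    {p q : Ideal R} [p.IsPrime] [q.IsPrime] (hpq : p < q)
    {m : ℕ} (t : Fin m → R ⧸ q) (ht : AlgebraicIndependent k t) :
    ∃ u : Fin (m + 1) → R ⧸ p, AlgebraicIndependent k u := by
  classical
  -- lift t to R
  have hsurj : Function.Surjective (Ideal.Quotient.mk q) := Ideal.Quotient.mk_surjective
  choose tl htl using fun i => hsurj (t i)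
  obtain ⟨a, haq, hap⟩ := SetLike.exists_of_lt hpq
  set v : Fin m → R ⧸ p := fun i => Ideal.Quotient.mk p (tl i) with hv
  set ab : R ⧸ p := Ideal.Quotient.mk p a with hab
  have habne : ab ≠ 0 := by
    simpa [hab, Ideal.Quotient.eq_zero_iff_mem] using hap
  -- the evaluation of polynomials in one variable over MvPolynomial
  set φ : MvPolynomial (Fin m) k →+* R ⧸ p :=
    (MvPolynomial.aeval (R := k) v).toRingHom with hφ
  set ψ : Polynomial (MvPolynomial (Fin m) k) →+* R ⧸ p := eval₂RingHom φ ab with hψ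
  -- factor map
  set g : R ⧸ p →+* R ⧸ q := Ideal.Quotient.factor (le_of_lt hpq) with hg
  have hgφ : (g.comp φ) = (MvPolynomial.aeval (R := k) t).toRingHom := by
    refine MvPolynomial.ringHom_ext (fun c => ?_) (fun i => ?_)
    · show g (MvPolynomial.aeval (R := k) v (MvPolynomial.C c))
        = MvPolynomial.aeval (R := k) t (MvPolynomial.C c)
      rw [MvPolynomial.aeval_C, MvPolynomial.aeval_C,
        ← Ideal.Quotient.mk_algebraMap, ← Ideal.Quotient.mk_algebraMap, hg,
        Ideal.Quotient.factor_mk]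
    · show g (MvPolynomial.aeval (R := k) v (MvPolynomial.X i))
        = MvPolynomial.aeval (R := k) t (MvPolynomial.X i)
      rw [MvPolynomial.aeval_X, MvPolynomial.aeval_X, hv, hg,
        Ideal.Quotient.factor_mk, htl]
  have hgab : g ab = 0 := by
    rw [hab, hg, Ideal.Quotient.factor_mk, Ideal.Quotient.eq_zero_iff_mem]
    exact haq
  -- key: ψ is injective
  have hψ0 : ∀ N (Q : Polynomial (MvPolynomial (Fin m) k)), Q.natDegree ≤ N →
      ψ Q = 0 → Q = 0 := by
    intro N
    induction N with
    | zero =>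
      intro Q hQdeg hQ0
      have hQC : Q = Polynomial.C (Q.coeff 0) := Polynomial.eq_C_of_natDegree_le_zero hQdeg
      have h1 : MvPolynomial.aeval (R := k) t (Q.coeff 0) = 0 := by
        have := congrArg g hQ0
        rw [hψ, coe_eval₂RingHom, Polynomial.hom_eval₂, hgφ, hgab, map_zero,
          Polynomial.eval₂_at_zero] at this
        exact this
      have := ht.eq_zero_of_aeval_eq_zero _ h1
      rw [hQC, this, map_zero]
    | succ N ih =>
      intro Q hQdeg hQ0
      have hc0 : Q.coeff 0 = 0 := by
        have h1 : MvPolynomial.aeval (R := k) t (Q.coeff 0) = 0 := by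
          have := congrArg g hQ0
          rw [hψ, coe_eval₂RingHom, Polynomial.hom_eval₂, hgφ, hgab, map_zero,
            Polynomial.eval₂_at_zero] at this
          exact this
        exact ht.eq_zero_of_aeval_eq_zero _ h1
      have hQX : Polynomial.X * Q.divX = Q := by
        have := Polynomial.X_mul_divX_add Q
        rwa [hc0, map_zero, add_zero] at this
      have hdiv : ψ Q.divX = 0 := by
        have : ψ (Polynomial.X * Q.divX) = 0 := by rw [hQX]; exact hQ0
        rw [map_mul] at this
        have hX : ψ Polynomial.X = ab := by simp [hψ]
        rw [hX] at this
        rcases mul_eq_zero.mp this with h | h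
        · exact absurd h habne
        · exact h
      have hdeg : Q.divX.natDegree ≤ N := by
        have := Polynomial.natDegree_divX_eq_natDegree_tsub_one (p := Q)
        omega
      have := ih Q.divX hdeg hdiv
      rw [← hQX, this, mul_zero]
  -- now conclude: Fin.cons ab v is algebraically independent
  refine ⟨Fin.cons ab v, ?_⟩
  rw [algebraicIndependent_iff]
  intro P hP
  -- transfer along finSuccEquiv
  have hcomp : ∀ P : MvPolynomial (Fin (m+1)) k,
      MvPolynomial.aeval (R := k) (Fin.cons ab v) P = ψ (finSuccEquiv k m P) := by
    intro P
    have heq : ((MvPolynomial.aeval (R := k) (Fin.cons ab v)).toRingHom :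
          MvPolynomial (Fin (m+1)) k →+* R ⧸ p)
        = ψ.comp (finSuccEquiv k m : MvPolynomial (Fin (m+1)) k →+* _) := by
      refine MvPolynomial.ringHom_ext (fun c => ?_) (fun i => ?_)
      · simp [hψ, hφ, finSuccEquiv_apply]
      · refine Fin.cases ?_ (fun j => ?_) i
        · simp [hψ, finSuccEquiv_X_zero]
        · simp [hψ, finSuccEquiv_X_succ, hφ]
    exact congrFun (congrArg (fun (f : MvPolynomial (Fin (m+1)) k →+* R ⧸ p) => (f : _ → _)) heq) P
  rw [hcomp] at hP
  have := hψ0 _ _ le_rfl hP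
  exact (map_eq_zero_iff _ (finSuccEquiv k m).injective).mp this

end

section
open MvPolynomial

variable {k : Type*} [Field k] {n : ℕ}

theorem ltSeries_length_le (c : LTSeries (PrimeSpectrum (MvPolynomial (Fin n) k))) :
    c.length ≤ n := by
  classical
  set R := MvPolynomial (Fin n) k
  have key : ∀ j : ℕ, (hj : j ≤ c.length) →
      ∃ u : Fin j → R ⧸ (c.toFun ⟨c.length - j, by omega⟩).asIdeal,
        AlgebraicIndependent k u := by
    intro j
    induction j with
    | zero =>
      intro hj
      exact ⟨fun i => 0, algebraicIndependent_empty_type⟩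
    | succ m ih =>
      intro hj
      obtain ⟨u, hu⟩ := ih (by omega)
      have hlt : c.toFun ⟨c.length - (m+1), by omega⟩ < c.toFun ⟨c.length - m, by omega⟩ := by
        apply c.strictMono
        simp only [Fin.mk_lt_mk]
        omega
      have hlt' : (c.toFun ⟨c.length - (m+1), by omega⟩).asIdeal
          < (c.toFun ⟨c.length - m, by omega⟩).asIdeal :=
        (PrimeSpectrum.asIdeal_lt_asIdeal _ _).mpr hlt
      exact exists_algIndep_succ_of_lt hlt' u hu
  by_contra hlen
  push_neg at hlen
  obtain ⟨u, hu⟩ := key c.length le_rfl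
  -- restrict to the first n+1 elements
  have hu' : AlgebraicIndependent k (u ∘ Fin.castLE hlen) :=
    hu.comp _ (Fin.castLE_injective hlen)
  have hsurj : Function.Surjective (Ideal.Quotient.mk ((c.toFun ⟨c.length - c.length, by omega⟩).asIdeal)) := Ideal.Quotient.mk_surjective
  choose w hw using fun i : Fin (n+1) => hsurj (u (Fin.castLE hlen i))
  have hwind : AlgebraicIndependent k w := by
    refine AlgebraicIndependent.of_comp
      (Ideal.Quotient.mkₐ k ((c.toFun ⟨c.length - c.length, by omega⟩).asIdeal)) ?_
    have : (Ideal.Quotient.mkₐ k ((c.toFun ⟨c.length - c.length, by omega⟩).asIdeal)) ∘ w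
        = u ∘ Fin.castLE hlen := by
      funext i
      simpa [Ideal.Quotient.mkₐ_eq_mk] using hw i
    rwa [this]
  exact not_algIndep_succ w hwind

/-- The canonical chain of primes in a polynomial ring. -/
theorem exists_ltSeries :
    ∃ c : LTSeries (PrimeSpectrum (MvPolynomial (Fin n) k)), c.length = n := by
  classical
  set R := MvPolynomial (Fin n) k
  set g : ℕ → Fin n → R := fun s j => if (j : ℕ) < n - s then X j else 0 with hgdef
  set φ : ℕ → (R →ₐ[k] R) := fun s => MvPolynomial.aeval (g s) with hφdef
  have hcomp : ∀ s t : ℕ, s ≤ t → (φ t).comp (φ s) = φ t := by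
    intro s t hst
    refine MvPolynomial.algHom_ext fun j => ?_
    simp only [AlgHom.comp_apply, hφdef, MvPolynomial.aeval_X]
    by_cases h : (j : ℕ) < n - s
    · simp only [hgdef, if_pos h]
      exact MvPolynomial.aeval_X _ j
    · have h2 : ¬ ((j : ℕ) < n - t) := by omega
      simp [hgdef, h, h2]
  have hker : ∀ s t : ℕ, s ≤ t → RingHom.ker (φ s).toRingHom ≤ RingHom.ker (φ t).toRingHom := by
    intro s t hst a ha
    have ha' : (φ s) a = 0 := ha
    show (φ t) a = 0
    have := congrArg (fun (f : R →ₐ[k] R) => f a) (hcomp s t hst)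
    simp only [AlgHom.comp_apply] at this
    rw [← this, ha', map_zero]
  have hstrict : ∀ s t : ℕ, s < t → t ≤ n →
      RingHom.ker (φ s).toRingHom < RingHom.ker (φ t).toRingHom := by
    intro s t hst htn
    refine lt_of_le_of_ne (hker s t (le_of_lt hst)) ?_
    intro heq
    have hjlt : n - s - 1 < n := by omega
    set j : Fin n := ⟨n - s - 1, hjlt⟩ with hjdef
    have hjval : (j : ℕ) = n - s - 1 := rfl
    have h1 : X j ∈ RingHom.ker (φ t).toRingHom := by
      show MvPolynomial.aeval (g t) (X j) = 0
      rw [MvPolynomial.aeval_X]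
      have hc : ¬ ((j : ℕ) < n - t) := by rw [hjval]; omega
      simp [hgdef, hc]
    have h2 : X j ∉ RingHom.ker (φ s).toRingHom := by
      show ¬ MvPolynomial.aeval (g s) (X j) = 0
      rw [MvPolynomial.aeval_X]
      have hc : ((j : ℕ) < n - s) := by rw [hjval]; omega
      simp [hgdef, hc]
      exact X_ne_zero j
    rw [heq] at h2
    exact h2 h1
  refine ⟨⟨n, fun i => ⟨RingHom.ker (φ (i : ℕ)).toRingHom, RingHom.ker_isPrime _⟩, ?_⟩, rfl⟩
  intro i
  show (_ : PrimeSpectrum (MvPolynomial (Fin n) k)) < _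
  rw [← PrimeSpectrum.asIdeal_lt_asIdeal]
  exact hstrict _ _ (by simp [Fin.lt_iff_val_lt_val]) (by omega)

theorem mvPolynomial_fin_ringKrullDim :
    ringKrullDim (MvPolynomial (Fin n) k) = n := by
  apply le_antisymm
  · show Order.krullDim (PrimeSpectrum (MvPolynomial (Fin n) k)) ≤ n
    rw [Order.krullDim_eq_iSup_length]
    have hn : ((n : ℕ∞) : WithBot ℕ∞) = (n : WithBot ℕ∞) := rfl
    rw [← hn, WithBot.coe_le_coe]
    refine iSup_le fun p => ?_
    exact_mod_cast ltSeries_length_le p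
  · obtain ⟨c, hc⟩ := exists_ltSeries (k := k) (n := n)
    have := Order.LTSeries.length_le_krullDim c
    rw [hc] at this
    exact_mod_cast this

end

section

open MvPolynomial

variable {k : Type*} [Field k] {n : ℕ}

/-- Chain rule for partial derivatives of a composition. -/
theorem pderiv_aeval_eq {σ τ : Type*} [Fintype τ] [DecidableEq σ] [DecidableEq τ]
    {R : Type*} [CommRing R]
    (g : τ → MvPolynomial σ R) (P : MvPolynomial τ R) (i : σ) :
    pderiv i (aeval g P) = ∑ j, aeval g (pderiv j P) * pderiv i (g j) := by
  induction P using MvPolynomial.induction_on with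
  | C a => simp
  | add p q hp hq =>
    rw [map_add, map_add, hp, hq, ← Finset.sum_add_distrib]
    refine Finset.sum_congr rfl fun l _ => ?_
    simp only [map_add]
    ring
  | mul_X p j hp =>
    have hl : ∀ l, pderiv l (p * X j) = pderiv l p * X j + if j = l then p else 0 := by
      intro l
      rw [pderiv_mul, pderiv_X, Pi.single_apply]
      split_ifs with h <;> simp
    calc pderiv i (aeval g (p * X j))
        = pderiv i (aeval g p * g j) := by rw [map_mul, aeval_X]
      _ = pderiv i (aeval g p) * g j + aeval g p * pderiv i (g j) := pderiv_mul
      _ = (∑ l, aeval g (pderiv l p) * pderiv i (g l)) * g j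
            + aeval g p * pderiv i (g j) := by rw [hp]
      _ = (∑ l, aeval g (pderiv l p) * g j * pderiv i (g l))
            + ∑ l, (if j = l then aeval g p * pderiv i (g l) else 0) := by
          rw [Finset.sum_mul, Finset.sum_ite_eq Finset.univ j
            (fun l => aeval g p * pderiv i (g l)), if_pos (Finset.mem_univ j)]
          congr 1
          refine Finset.sum_congr rfl fun l _ => by ring
      _ = ∑ l, aeval g (pderiv l (p * X j)) * pderiv i (g l) := by
          rw [← Finset.sum_add_distrib]
          refine Finset.sum_congr rfl fun l _ => ?_
          rw [hl l, map_add, map_mul, aeval_X, apply_ite (aeval g), map_zero, add_mul,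
            ite_mul, zero_mul]

/-- A coefficient formula for partial derivatives. -/
theorem coeff_pderiv {σ : Type*} [DecidableEq σ] {R : Type*} [CommRing R]
    (P : MvPolynomial σ R) (j : σ) (m : σ →₀ ℕ) (hm : m j ≠ 0) :
    coeff (m - Finsupp.single j 1) (pderiv j P) = (m j : R) * coeff m P := by
  induction P using MvPolynomial.induction_on' with
  | monomial m' c =>
    rw [pderiv_monomial, coeff_monomial, coeff_monomial]
    by_cases h : m' = m
    · subst h
      rw [if_pos rfl, if_pos rfl, mul_comm]
    · rw [if_neg h]
      by_cases h2 : m' j = 0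
      · simp [h2]
      · rw [if_neg ?_]
        · ring
        · intro hc
          refine h ?_
          have e1 : m' - Finsupp.single j 1 + Finsupp.single j 1 = m' :=
            tsub_add_cancel_of_le (Finsupp.single_le_iff.mpr
              (Nat.one_le_iff_ne_zero.mpr h2))
          have e2 : m - Finsupp.single j 1 + Finsupp.single j 1 = m :=
            tsub_add_cancel_of_le (Finsupp.single_le_iff.mpr
              (Nat.one_le_iff_ne_zero.mpr hm))
          rw [← e1, ← e2, hc]
  | add p q hp hq =>
    rw [map_add, coeff_add, coeff_add, hp, hq, mul_add]

/-- In characteristic zero, a polynomial with all partial derivatives zero is constant. -/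
theorem totalDegree_eq_zero_of_pderiv [CharZero k] {σ : Type*} [DecidableEq σ]
    {P : MvPolynomial σ k} (h : ∀ j, pderiv j P = 0) : P.totalDegree = 0 := by
  by_contra hd
  have hsupp : P.support.Nonempty := by
    by_contra hs
    rw [Finset.not_nonempty_iff_eq_empty] at hs
    have : P = 0 := support_eq_empty.mp hs
    rw [this] at hd
    exact hd rfl
  obtain ⟨m, hm, hms⟩ := Finset.exists_mem_eq_sup P.support hsupp
    (fun m => m.sum fun _ e => e)
  have hts : P.totalDegree = m.sum fun _ e => e := by
    rw [totalDegree]; exact hms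
  have hmpos : 0 < m.sum fun _ e => e := by
    rw [← hts]
    exact Nat.pos_of_ne_zero hd
  have : ∃ j, m j ≠ 0 := by
    by_contra hc
    push_neg at hc
    have : (m.sum fun _ e => e) = 0 := by
      refine Finset.sum_eq_zero fun i _ => hc i
    omega
  obtain ⟨j, hj⟩ := this
  have hco := coeff_pderiv P j m hj
  rw [h j, coeff_zero] at hco
  have hPm : coeff m P ≠ 0 := mem_support_iff.mp hm
  have : (m j : k) ≠ 0 := Nat.cast_ne_zero.mpr hj
  exact (mul_ne_zero this hPm) hco.symm

/-- Derivatives decrease the total degree. -/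
theorem totalDegree_pderiv_lt {σ : Type*} [DecidableEq σ] {R : Type*} [CommRing R]
    (P : MvPolynomial σ R) (j : σ) (hd : 0 < P.totalDegree) :
    (pderiv j P).totalDegree < P.totalDegree := by
  classical
  rw [totalDegree]
  refine lt_of_le_of_lt (Finset.sup_le fun m hm => ?_) (Nat.sub_lt hd Nat.one_pos)
  · -- m.sum ≤ totalDegree - 1
    show (m.sum fun _ e => e) ≤ P.totalDegree - 1
    -- m comes from a monomial of P
    have hrepr : pderiv j P = ∑ m' ∈ P.support, monomial (m' - Finsupp.single j 1)
        ((coeff m' P) * (m' j : R)) := by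
      conv_lhs => rw [as_sum P]
      rw [map_sum]
      exact Finset.sum_congr rfl fun m' _ => pderiv_monomial
    rw [hrepr] at hm
    have := MvPolynomial.support_sum hm
    rw [Finset.mem_biUnion] at this
    obtain ⟨m', hm', hmm⟩ := this
    have hsub : (support (monomial (m' - Finsupp.single j 1) ((coeff m' P) * (m' j : R))))
        ⊆ {m' - Finsupp.single j 1} := support_monomial_subset
    have hmem := hsub hmm
    rw [Finset.mem_singleton] at hmem
    subst hmem
    -- now show m' j ≠ 0
    by_cases hj : m' j = 0
    · -- then the coefficient is zero, so support is empty; contradiction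
      exfalso
      have : ((coeff m' P) * (m' j : R)) = 0 := by rw [hj]; simp
      rw [this, monomial_zero] at hmm
      simpa using hmm
    · have e1 : m' - Finsupp.single j 1 + Finsupp.single j 1 = m' :=
        tsub_add_cancel_of_le (Finsupp.single_le_iff.mpr
          (Nat.one_le_iff_ne_zero.mpr hj))
      have h1 : (m'.sum fun _ e => e)
          = ((m' - Finsupp.single j 1).sum fun _ e => e) + 1 := by
        conv_lhs => rw [← e1]
        rw [Finsupp.sum_add_index' (fun _ => rfl) (fun _ _ _ => rfl),
          Finsupp.sum_single_index rfl]
      have h2 : (m'.sum fun _ e => e) ≤ P.totalDegree := le_totalDegree hm'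
      omega

/-- The Jacobian criterion. -/
theorem algIndep_pderiv_of_hessian [CharZero k] {f : MvPolynomial (Fin n) k}
    (hhess : (Matrix.of fun i j : Fin n => pderiv i (pderiv j f)).det ≠ 0) :
    AlgebraicIndependent k (fun i : Fin n => pderiv i f) := by
  classical
  letI R := MvPolynomial (Fin n) k
  letI K := FractionRing (MvPolynomial (Fin n) k)
  set t : Fin n → MvPolynomial (Fin n) k := fun i => pderiv i f with ht
  rw [algebraicIndependent_iff]
  suffices H : ∀ N : ℕ, ∀ P : MvPolynomial (Fin n) k, P.totalDegree ≤ N →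
      aeval t P = 0 → P = 0 by
    intro P hP; exact H P.totalDegree P le_rfl hP
  have constant_case : ∀ P : MvPolynomial (Fin n) k, P.totalDegree = 0 →
      aeval t P = 0 → P = 0 := by
    intro P hdeg hP
    have hC : P = MvPolynomial.C (coeff 0 P) := by
      apply MvPolynomial.ext
      intro m
      rw [coeff_C]
      by_cases h : 0 = m
      · rw [← h]; rw [if_pos rfl]
      · rw [if_neg h]
        by_contra hc
        have hm : m ∈ P.support := mem_support_iff.mpr hc
        have := (totalDegree_eq_zero_iff _ P).mp hdeg m hm
        refine h ?_
        ext x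
        simp [this x]
    rw [hC] at hP ⊢
    rw [aeval_C] at hP
    have : coeff 0 P = 0 := by
      have hinj : Function.Injective (algebraMap k (MvPolynomial (Fin n) k)) := RingHom.injective _
      exact hinj (by rw [hP, map_zero])
    rw [this, map_zero]
  intro N
  induction N with
  | zero =>
    intro P hdeg hP
    exact constant_case P (Nat.le_zero.mp hdeg) hP
  | succ N ih =>
    intro P hdeg hP
    by_cases hdeg0 : P.totalDegree = 0
    · exact constant_case P hdeg0 hP
    -- each aeval t (pderiv j P) = 0
    have hv : ∀ j, aeval t (pderiv j P) = 0 := by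
      have hderiv : ∀ i, ∑ j, aeval t (pderiv j P) * pderiv i (t j) = 0 := by
        intro i
        rw [← pderiv_aeval_eq t P i, hP, map_zero]
      set A : Matrix (Fin n) (Fin n) (FractionRing (MvPolynomial (Fin n) k)) :=
        Matrix.transpose ((Matrix.of fun i j : Fin n => pderiv i (pderiv j f)).map
          (algebraMap (MvPolynomial (Fin n) k) (FractionRing (MvPolynomial (Fin n) k)))) with hA
      have hAdet : IsUnit A.det := by
        rw [hA, Matrix.det_transpose, ← RingHom.mapMatrix_apply, ← RingHom.map_det]
        refine isUnit_iff_ne_zero.mpr fun h => hhess ?_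
        exact IsFractionRing.injective (MvPolynomial (Fin n) k) (FractionRing (MvPolynomial (Fin n) k)) (by rw [h, map_zero])
      set w : Fin n → FractionRing (MvPolynomial (Fin n) k) := fun j => algebraMap (MvPolynomial (Fin n) k) (FractionRing (MvPolynomial (Fin n) k)) (aeval t (pderiv j P)) with hw
      have hwA : Matrix.vecMul w A = 0 := by
        funext i
        show dotProduct w (fun j => A j i) = 0
        rw [dotProduct]
        have : ∀ j, w j * A j i
            = algebraMap (MvPolynomial (Fin n) k) (FractionRing (MvPolynomial (Fin n) k)) (aeval t (pderiv j P) * pderiv i (t j)) := by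
          intro j
          rw [hw, hA, map_mul]
          simp [Matrix.transpose_apply, Matrix.map_apply, ht]
        rw [Finset.sum_congr rfl fun j _ => this j, ← map_sum, hderiv i, map_zero]
      have hw0 : w = 0 := by
        have h1 := congrArg (fun v => Matrix.vecMul v A⁻¹) hwA
        simp only [Matrix.vecMul_vecMul, Matrix.zero_vecMul] at h1
        rwa [Matrix.mul_nonsing_inv A hAdet, Matrix.vecMul_one] at h1
      intro j
      have h2 := congrFun hw0 j
      simp only [hw, Pi.zero_apply] at h2
      exact IsFractionRing.injective (MvPolynomial (Fin n) k) (FractionRing (MvPolynomial (Fin n) k)) (by rw [h2, map_zero])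
    have hpzero : ∀ j, pderiv j P = 0 := by
      intro j
      by_cases hj : pderiv j P = 0
      · exact hj
      · refine ih _ ?_ (hv j)
        have := totalDegree_pderiv_lt P j (Nat.pos_of_ne_zero hdeg0)
        omega
    exact absurd (totalDegree_eq_zero_of_pderiv hpzero) hdeg0

end


section
open MvPolynomial

/-- The dimension of the polar image `Z(f)` plus one (i.e. the Krull dimension of
the affine cone `k[f_0,…,f_r]`, the coordinate ring of the closure of the image of
the polar map) equals the rank `ρ(f)` of the Hessian matrix of `f` computed over the
rational function field `k(x_0,…,x_r)`. -/
theorem dim_polar_image_eq_hessian_rank {k : Type*} [Field k] [CharZero k]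
    {r d : ℕ} (f : MvPolynomial (Fin (r + 1)) k) (hf : f.IsHomogeneous d)
    (hhess : (Matrix.of fun i j : Fin (r + 1) =>
        MvPolynomial.pderiv i (MvPolynomial.pderiv j f)).det ≠ 0) :
    ringKrullDim
        (Algebra.adjoin k
          (Set.range (fun i : Fin (r + 1) => MvPolynomial.pderiv i f)))
      = ((Matrix.of fun i j : Fin (r + 1) =>
            algebraMap (MvPolynomial (Fin (r + 1)) k)
              (FractionRing (MvPolynomial (Fin (r + 1)) k))
              (MvPolynomial.pderiv i (MvPolynomial.pderiv j f))).rank : WithBot (WithTop ℕ)) := by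
  classical
  have hindep : AlgebraicIndependent k (fun i : Fin (r+1) => MvPolynomial.pderiv i f) :=
    algIndep_pderiv_of_hessian hhess
  have hL : ringKrullDim
      (Algebra.adjoin k (Set.range (fun i : Fin (r + 1) => MvPolynomial.pderiv i f)))
      = ((r + 1 : ℕ) : WithBot (WithTop ℕ)) := by
    rw [← ringKrullDim_eq_of_ringEquiv hindep.aevalEquiv.toRingEquiv]
    exact_mod_cast mvPolynomial_fin_ringKrullDim
  have hM : (Matrix.of fun i j : Fin (r + 1) =>
        algebraMap (MvPolynomial (Fin (r + 1)) k)
          (FractionRing (MvPolynomial (Fin (r + 1)) k))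
          (MvPolynomial.pderiv i (MvPolynomial.pderiv j f)))
      = (Matrix.of fun i j : Fin (r + 1) =>
          MvPolynomial.pderiv i (MvPolynomial.pderiv j f)).map
        (algebraMap (MvPolynomial (Fin (r + 1)) k)
          (FractionRing (MvPolynomial (Fin (r + 1)) k))) := rfl
  have hdet : IsUnit ((Matrix.of fun i j : Fin (r + 1) =>
        algebraMap (MvPolynomial (Fin (r + 1)) k)
          (FractionRing (MvPolynomial (Fin (r + 1)) k))
          (MvPolynomial.pderiv i (MvPolynomial.pderiv j f))).det) := by
    rw [hM, ← RingHom.mapMatrix_apply, ← RingHom.map_det]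
    refine isUnit_iff_ne_zero.mpr fun h => hhess ?_
    exact IsFractionRing.injective (MvPolynomial (Fin (r + 1)) k)
      (FractionRing (MvPolynomial (Fin (r + 1)) k)) (by rw [h, map_zero])
  have hrank : (Matrix.of fun i j : Fin (r + 1) =>
        algebraMap (MvPolynomial (Fin (r + 1)) k)
          (FractionRing (MvPolynomial (Fin (r + 1)) k))
          (MvPolynomial.pderiv i (MvPolynomial.pderiv j f))).rank = r + 1 := by
    rw [Matrix.rank_of_isUnit _ ((Matrix.isUnit_iff_isUnit_det _).mpr hdet)]
    simp
  rw [hL, hrank]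
end
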